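/- Let n ≥ 2, k ≥ 1, and let x_1 ≤ … ≤ x_n and x_{n+1} be positive reals with k·x_{n+1} ≤ 2x_1 and (k−1)x_{n+1} < Σ_{i=1}^n x_i. Then k(Σ_{i=1}^n x_i − (k−1)x_{n+1})^n / ∏_{i=1}^n x_i ≥ k n^n ((Σ_{i=1}^n x_i − (k−1)x_{n+1}) / Σ_{i=1}^n x_i)^n, and the right-hand side is a strictly decreasing function of x_{n+1} (for k ≥ 2). -/

import Mathlib

open Finset in
lemma amgm_pow (n : ℕ) (hn : 1 ≤ n) (x : ℕ → ℝ)
    (hpos : ∀ i ∈ Finset.Icc 1 n, 0 < x i) :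
    (n : ℝ) ^ n * ∏ i ∈ Finset.Icc 1 n, x i ≤ (∑ i ∈ Finset.Icc 1 n, x i) ^ n := by
  have hcard : (Finset.Icc 1 n).card = n := by simp [Nat.card_Icc]
  have hn0 : (n : ℝ) ≠ 0 := Nat.cast_ne_zero.mpr (by omega)
  have h := Real.geom_mean_le_arith_mean_weighted (Finset.Icc 1 n)
    (fun _ => (n : ℝ)⁻¹) x (fun i _ => by positivity)
    (by simp [hcard]; field_simp) (fun i hi => (hpos i hi).le)
  -- h : ∏ x i ^ (n⁻¹) ≤ ∑ n⁻¹ * x i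
  have hL : (∏ i ∈ Finset.Icc 1 n, x i ^ ((n : ℝ)⁻¹)) ^ n
      = ∏ i ∈ Finset.Icc 1 n, x i := by
    rw [← Finset.prod_pow]
    refine Finset.prod_congr rfl fun i hi => ?_
    rw [← Real.rpow_natCast (x i ^ ((n:ℝ)⁻¹)) n, ← Real.rpow_mul (hpos i hi).le,
      inv_mul_cancel₀ hn0, Real.rpow_one]
  have hR : (∑ i ∈ Finset.Icc 1 n, (n : ℝ)⁻¹ * x i)
      = (∑ i ∈ Finset.Icc 1 n, x i) / n := by
    rw [← Finset.mul_sum]; ring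
  have hLnn : 0 ≤ ∏ i ∈ Finset.Icc 1 n, x i ^ ((n : ℝ)⁻¹) :=
    Finset.prod_nonneg fun i hi => Real.rpow_nonneg (hpos i hi).le _
  have := pow_le_pow_left₀ hLnn h n
  rw [hL, hR, div_pow] at this
  have hnpow : (0:ℝ) < (n:ℝ)^n := by positivity
  calc (n : ℝ) ^ n * ∏ i ∈ Finset.Icc 1 n, x i
      ≤ (n : ℝ) ^ n * ((∑ i ∈ Finset.Icc 1 n, x i) ^ n / (n:ℝ)^n) := by
        exact mul_le_mul_of_nonneg_left this hnpow.le
    _ = (∑ i ∈ Finset.Icc 1 n, x i) ^ n := by field_simp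

/-- Case `k·x_{n+1} ≤ 2 x_1` for the `A_{k−1}` singularity: with
`S = Σ_{i=1}^n x_i`, one has
`k (S − (k−1) x_{n+1})^n / ∏_{i=1}^n x_i ≥ k n^n ((S − (k−1)x_{n+1})/S)^n`,
and (for `k ≥ 2`) the right-hand side is strictly decreasing in `x_{n+1}`. -/
theorem stmt_7 (n k : ℕ) (hn : 2 ≤ n) (hk : 1 ≤ k) (x : ℕ → ℝ)
    (hpos : ∀ i ∈ Finset.Icc 1 (n + 1), 0 < x i)
    (hmono : ∀ i j, 1 ≤ i → i ≤ j → j ≤ n → x i ≤ x j)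
    (hcase : (k : ℝ) * x (n + 1) ≤ 2 * x 1)
    (hpos' : ((k : ℝ) - 1) * x (n + 1) < ∑ i ∈ Finset.Icc 1 n, x i) :
    ((k : ℝ) * ((∑ i ∈ Finset.Icc 1 n, x i) - ((k : ℝ) - 1) * x (n + 1)) ^ n /
        ∏ i ∈ Finset.Icc 1 n, x i ≥
      (k : ℝ) * (n : ℝ) ^ n *
        (((∑ i ∈ Finset.Icc 1 n, x i) - ((k : ℝ) - 1) * x (n + 1)) /
            (∑ i ∈ Finset.Icc 1 n, x i)) ^ n) ∧
    (2 ≤ k → ∀ y y' : ℝ, 0 < y → y < y' →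
      ((k : ℝ) - 1) * y' < ∑ i ∈ Finset.Icc 1 n, x i →
      (k : ℝ) * (n : ℝ) ^ n *
          (((∑ i ∈ Finset.Icc 1 n, x i) - ((k : ℝ) - 1) * y') /
              (∑ i ∈ Finset.Icc 1 n, x i)) ^ n <
        (k : ℝ) * (n : ℝ) ^ n *
          (((∑ i ∈ Finset.Icc 1 n, x i) - ((k : ℝ) - 1) * y) /
              (∑ i ∈ Finset.Icc 1 n, x i)) ^ n) := by
  set S := ∑ i ∈ Finset.Icc 1 n, x i with hS
  set P := ∏ i ∈ Finset.Icc 1 n, x i with hP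
  have hposn : ∀ i ∈ Finset.Icc 1 n, 0 < x i := fun i hi => by
    apply hpos; simp at hi ⊢; omega
  have hSpos : 0 < S := Finset.sum_pos hposn (by simp; omega)
  have hPpos : 0 < P := Finset.prod_pos hposn
  have hkpos : (0:ℝ) < k := by exact_mod_cast hk
  have hamgm := amgm_pow n (by omega) x hposn
  constructor
  · set T := S - ((k:ℝ)-1) * x (n+1) with hT
    have hTpos : 0 < T := by rw [hT]; linarith
    rw [ge_iff_le, div_pow, mul_assoc, mul_div_assoc]
    refine mul_le_mul_of_nonneg_left ?_ hkpos.le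
    rw [mul_div_assoc', div_le_div_iff₀ (by positivity) hPpos]
    nlinarith [mul_le_mul_of_nonneg_left hamgm (pow_pos hTpos n).le]
  · intro hk2 y y' hy hyy' hy'
    have hk1 : (0:ℝ) < (k:ℝ) - 1 := by
      have : (2:ℝ) ≤ k := by exact_mod_cast hk2
      linarith
    have h1 : 0 ≤ S - ((k:ℝ)-1) * y' := by linarith
    have h2 : S - ((k:ℝ)-1) * y' < S - ((k:ℝ)-1) * y := by nlinarith
    refine mul_lt_mul_of_pos_left ?_ (by positivity)
    apply pow_lt_pow_left₀ _ (by positivity) (by omega)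
    exact div_lt_div_of_pos_right h2 hSpos
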